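/- Correctness of the up-sweep: let (M, ⊗) be a semigroup, n ∈ ℕ, T = 2ⁿ, and a : {1, …, T} → M (1-indexed). Define u_0 = a and, for d = 0, …, n−1, u_{d+1}(k) = u_d(k − 2^d) ⊗ u_d(k) if k is a multiple of 2^{d+1}, and u_{d+1}(k) = u_d(k) otherwise. Then for every D with 0 ≤ D ≤ n and every m with 1 ≤ m ≤ 2^{n−D}, u_D(m·2^D) = a((m−1)·2^D + 1) ⊗ a((m−1)·2^D + 2) ⊗ ⋯ ⊗ a(m·2^D). -/

import Mathlib

/-- `seqProd a s j = a s * a (s+1) * ⋯ * a (s+j)` in a semigroup. -/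
def seqProd {M : Type*} [Semigroup M] (a : ℕ → M) (s : ℕ) : ℕ → M
  | 0 => a s
  | j + 1 => seqProd a s j * a (s + j + 1)

/-- One level of the up-sweep: position `k` becomes `u (k - 2^d) * u k` if `k` is a
multiple of `2^(d+1)`, and is left unchanged otherwise. -/
def upStep {M : Type*} [Semigroup M] (d : ℕ) (u : ℕ → M) : ℕ → M :=
  fun k => if 2 ^ (d + 1) ∣ k then u (k - 2 ^ d) * u k else u k

/-- `upIter a d` is the (1-indexed) array after `d` levels of the up-sweep
(`u_0 = a`, `u_{d+1} = upStep d u_d`). -/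
def upIter {M : Type*} [Semigroup M] (a : ℕ → M) : ℕ → ℕ → M
  | 0 => a
  | d + 1 => upStep d (upIter a d)

lemma seqProd_append {M : Type*} [Semigroup M] (a : ℕ → M) (s i : ℕ) :
    ∀ j, seqProd a s i * seqProd a (s + i + 1) j = seqProd a s (i + j + 1) := by
  intro j
  induction j with
  | zero => simp [seqProd]
  | succ j ih =>
      show seqProd a s i * (seqProd a (s + i + 1) j * a (s + i + 1 + j + 1)) = _
      rw [← mul_assoc, ih]
      show _ = seqProd a s (i + j + 1) * a (s + (i + j + 1) + 1)
      congr 2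
      omega

/-- Correctness of the up-sweep on a 1-indexed array of length `T = 2^n`: after `D`
levels, every position `m·2^D` (for `1 ≤ m ≤ 2^(n-D)`) holds the product of its block
`a ((m-1)·2^D + 1) * ⋯ * a (m·2^D)` of `2^D` consecutive input elements. -/
theorem upsweep_correct {M : Type*} [Semigroup M] (n : ℕ) (a : ℕ → M) :
    ∀ D, D ≤ n → ∀ m, 1 ≤ m → m ≤ 2 ^ (n - D) →
      upIter a D (m * 2 ^ D) = seqProd a ((m - 1) * 2 ^ D + 1) (2 ^ D - 1) := by
  intro D
  induction D with
  | zero => intro _ m hm _; simp [upIter, seqProd, Nat.sub_add_cancel hm]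
  | succ D ih =>
      intro hD m hm hm2
      have hD' : D ≤ n := by omega
      have hpow : 0 < 2 ^ D := Nat.pow_pos (by norm_num)
      have h2m : 2 * m ≤ 2 ^ (n - D) := by
        have : n - D = (n - (D+1)) + 1 := by omega
        rw [this, pow_succ]
        omega
      have hdvd : 2 ^ (D + 1) ∣ m * 2 ^ (D + 1) := dvd_mul_left _ _
      have key : m * 2 ^ (D + 1) = (2 * m) * 2 ^ D := by rw [pow_succ]; ring
      have key2 : m * 2 ^ (D + 1) - 2 ^ D = (2 * m - 1) * 2 ^ D := by
        rw [key, Nat.sub_one_mul]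
      show upStep D (upIter a D) (m * 2 ^ (D + 1)) = _
      rw [upStep, if_pos hdvd, key2, key,
        ih hD' (2 * m - 1) (by omega) (by omega),
        ih hD' (2 * m) (by omega) h2m]
      have e1 : (2 * m - 1 - 1) * 2 ^ D + 1 + (2 ^ D - 1) + 1 = (2 * m - 1) * 2 ^ D + 1 := by
        rw [Nat.sub_one_mul (2*m-1)]
        have : 2 ^ D ≤ (2*m-1) * 2^D := Nat.le_mul_of_pos_left _ (by omega)
        omega
      rw [← e1, seqProd_append]
      congr 1
      · have h : 2 * m - 1 - 1 = 2 * (m - 1) := by omega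
        rw [h, pow_succ]; ring_nf
      · rw [pow_succ]; omega
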